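/- Let Γ be a countable discrete group, 1 ≤ p ≤ ∞, k, n ∈ ℕ, and A ∈ M_{n×k}(ℤΓ). Then the following are equivalent: (i) there exists ε > 0 such that the only x ∈ X_A = {x ∈ ((ℝ/ℤ)^Γ)^k : xA* = 0} for which the function s ↦ ρ_∞(x_s, 0) has ℓ^p-norm less than ε is x = 0 (this condition is the p-expansiveness of the shift action on X_A); (ii) the bounded linear map ℓ^p(Γ, ℝ^k) → ℓ^p(Γ, ℝ^n) sending a to aA* is injective. -/

import Mathlib

/-!
STATEMENT 4: For `1 ≤ p ≤ ∞` and `A ∈ M_{n×k}(ℤΓ)`, `p`-expansiveness of the shift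
action on `X_A` is equivalent to injectivity of `a ↦ aA*` on `ℓ^p(Γ, ℝ^k)`.
-/

open scoped Classical ENNReal

namespace Stmt4

variable {Γ : Type*} [Group Γ]

/-- The `ℓ^p`-norm (valued in `ℝ≥0∞`) of a function on `Γ` with values in a normed group;
for `p = ∞` it is the supremum norm. -/
noncomputable def pNorm (p : ℝ≥0∞) {α E : Type*} [NormedAddCommGroup E] (f : α → E) :
    ℝ≥0∞ :=
  if p = ∞ then ⨆ a, (‖f a‖₊ : ℝ≥0∞)
  else (∑' a, (‖f a‖₊ : ℝ≥0∞) ^ p.toReal) ^ (1 / p.toReal)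

/-- The row vector `x A*`, for `x ∈ (M^Γ)^k` (as a `k`-tuple of functions) and
`A ∈ M_{n×k}(ℤΓ)`: `(xA*)_i(s) = ∑_j ∑_u (A i j)(u) • x_j(s u)`. -/
noncomputable def mulStar {k n : ℕ} {M : Type*} [AddCommGroup M]
    (x : Fin k → Γ → M) (A : Matrix (Fin n) (Fin k) (MonoidAlgebra ℤ Γ)) :
    Fin n → Γ → M :=
  fun i s => ∑ j, (A i j).coeff.sum fun u c => c • x j (s * u)

/-- The row vector `a A*` for `a : Γ → ℝ^k` (vector-valued function form). -/
noncomputable def rmulStar {k n : ℕ} {M : Type*} [AddCommGroup M]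
    (a : Γ → Fin k → M) (A : Matrix (Fin n) (Fin k) (MonoidAlgebra ℤ Γ)) :
    Γ → Fin n → M :=
  fun s i => ∑ j, (A i j).coeff.sum fun u c => c • a (s * u) j

/-- The closed shift-invariant subgroup `X_A = {x ∈ ((ℝ/ℤ)^Γ)^k : xA* = 0}`, i.e. the
Pontryagin dual of `(ℤΓ)^k/(ℤΓ)^nA`. -/
def XA {k n : ℕ} (A : Matrix (Fin n) (Fin k) (MonoidAlgebra ℤ Γ)) :
    Set (Fin k → Γ → AddCircle (1 : ℝ)) :=
  {x | mulStar x A = 0}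

end Stmt4


namespace Stmt4Aux

open Stmt4

variable {α E F : Type*} [NormedAddCommGroup E] [NormedAddCommGroup F]



theorem pNorm_congr (p : ℝ≥0∞) {f : α → E} {g : α → F}
    (h : ∀ a, ‖f a‖₊ = ‖g a‖₊) : pNorm p f = pNorm p g := by
  simp only [pNorm, h]

theorem pNorm_mono (p : ℝ≥0∞) {f : α → E} {g : α → F}
    (h : ∀ a, ‖f a‖₊ ≤ ‖g a‖₊) : pNorm p f ≤ pNorm p g := by
  unfold pNorm
  split_ifs
  · exact iSup_mono fun a => ENNReal.coe_le_coe.2 (h a)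
  · refine ENNReal.rpow_le_rpow (ENNReal.tsum_le_tsum fun a => ?_)
      (by positivity)
    exact ENNReal.rpow_le_rpow (ENNReal.coe_le_coe.2 (h a)) ENNReal.toReal_nonneg

theorem toReal_pos {p : ℝ≥0∞} (hp : 1 ≤ p) (hp' : p ≠ ∞) : 0 < p.toReal :=
  ENNReal.toReal_pos (fun h => by simp [h] at hp) hp'

theorem le_pNorm {p : ℝ≥0∞} (hp : 1 ≤ p) (f : α → E) (a : α) :
    (‖f a‖₊ : ℝ≥0∞) ≤ pNorm p f := by
  unfold pNorm
  split_ifs with h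
  · exact le_iSup (fun a => (‖f a‖₊ : ℝ≥0∞)) a
  · have hr : 0 < p.toReal := toReal_pos hp h
    calc (‖f a‖₊ : ℝ≥0∞) = (((‖f a‖₊ : ℝ≥0∞)) ^ p.toReal) ^ (1 / p.toReal) := by
          rw [← ENNReal.rpow_mul, mul_one_div_cancel hr.ne', ENNReal.rpow_one]
      _ ≤ _ := ENNReal.rpow_le_rpow (ENNReal.le_tsum a) (by positivity)

theorem pNorm_zero {p : ℝ≥0∞} (hp : 1 ≤ p) : pNorm p (fun _ : α => (0 : E)) = 0 := by
  unfold pNorm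
  split_ifs with h
  · simp
  · have hr : 0 < p.toReal := toReal_pos hp h
    simp only [nnnorm_zero, ENNReal.coe_zero, ENNReal.zero_rpow_of_pos hr, tsum_zero,
      ENNReal.zero_rpow_of_pos (show (0:ℝ) < 1 / p.toReal by positivity)]

theorem pNorm_smul {p : ℝ≥0∞} (hp : 1 ≤ p) (t : ℝ) [NormedSpace ℝ E] (f : α → E) :
    pNorm p (fun a => t • f a) = (‖t‖₊ : ℝ≥0∞) * pNorm p f := by
  unfold pNorm
  split_ifs with h
  · simp only [nnnorm_smul, ENNReal.coe_mul]
    exact (ENNReal.mul_iSup _ _).symm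
  · have hr : 0 < p.toReal := toReal_pos hp h
    simp only [nnnorm_smul, ENNReal.coe_mul]
    rw [show ∀ g : α → ℝ≥0∞, (∑' a, ((‖t‖₊ : ℝ≥0∞) * g a) ^ p.toReal)
        = (‖t‖₊ : ℝ≥0∞) ^ p.toReal * ∑' a, g a ^ p.toReal from ?_]
    · rw [ENNReal.mul_rpow_of_nonneg _ _ (by positivity), ← ENNReal.rpow_mul,
        mul_one_div_cancel hr.ne', ENNReal.rpow_one]
    · intro g
      simp_rw [ENNReal.mul_rpow_of_nonneg _ _ ENNReal.toReal_nonneg]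
      exact ENNReal.tsum_mul_left

theorem pNorm_add_le {p : ℝ≥0∞} (hp : 1 ≤ p) (f g : α → E) :
    pNorm p (fun a => f a + g a) ≤ pNorm p f + pNorm p g := by
  unfold pNorm
  split_ifs with h
  · refine iSup_le fun a => ?_
    calc (‖f a + g a‖₊ : ℝ≥0∞) ≤ (‖f a‖₊ : ℝ≥0∞) + ‖g a‖₊ := by
          exact_mod_cast nnnorm_add_le _ _
      _ ≤ _ := add_le_add (le_iSup (fun a => (‖f a‖₊ : ℝ≥0∞)) a)
          (le_iSup (fun a => (‖g a‖₊ : ℝ≥0∞)) a)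
  · have hr : 0 < p.toReal := toReal_pos hp h
    have hr1 : 1 ≤ p.toReal := by
      rw [← ENNReal.toReal_one]
      exact ENNReal.toReal_mono h hp
    set F : α → ℝ≥0∞ := fun a => (‖f a‖₊ : ℝ≥0∞)
    set G : α → ℝ≥0∞ := fun a => (‖g a‖₊ : ℝ≥0∞)
    have key : ∀ s : Finset α, (∑ a ∈ s, (F a + G a) ^ p.toReal) ^ (1 / p.toReal)
        ≤ (∑' a, F a ^ p.toReal) ^ (1 / p.toReal) + (∑' a, G a ^ p.toReal) ^ (1 / p.toReal) := by
      intro s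
      refine (ENNReal.Lp_add_le s F G hr1).trans (add_le_add ?_ ?_) <;>
        exact ENNReal.rpow_le_rpow (ENNReal.sum_le_tsum s) (by positivity)
    have step : (∑' a, (F a + G a) ^ p.toReal) ^ (1 / p.toReal)
        ≤ (∑' a, F a ^ p.toReal) ^ (1 / p.toReal) + (∑' a, G a ^ p.toReal) ^ (1 / p.toReal) := by
      set R := (∑' a, F a ^ p.toReal) ^ (1 / p.toReal) + (∑' a, G a ^ p.toReal) ^ (1 / p.toReal)
      have : (∑' a, (F a + G a) ^ p.toReal) ≤ R ^ p.toReal := by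
        rw [ENNReal.tsum_eq_iSup_sum]
        refine iSup_le fun s => ?_
        have := ENNReal.rpow_le_rpow (key s) ENNReal.toReal_nonneg (z := p.toReal)
        rwa [← ENNReal.rpow_mul, one_div_mul_cancel hr.ne', ENNReal.rpow_one] at this
      have := ENNReal.rpow_le_rpow this (by positivity : (0:ℝ) ≤ 1 / p.toReal)
      rwa [← ENNReal.rpow_mul, mul_one_div_cancel hr.ne', ENNReal.rpow_one] at this
    refine le_trans (le_trans (ENNReal.rpow_le_rpow (ENNReal.tsum_le_tsum fun a => ?_)
      (by positivity)) step) le_rfl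
    refine ENNReal.rpow_le_rpow ?_ ENNReal.toReal_nonneg
    show (‖f a + g a‖₊ : ℝ≥0∞) ≤ F a + G a
    simp only [F, G, ← ENNReal.coe_add]
    exact ENNReal.coe_le_coe.2 (nnnorm_add_le (f a) (g a))


variable {Γ : Type*} [Group Γ]

/-- The projection `ℝ → ℝ/ℤ` as an additive homomorphism. -/
noncomputable def pr : ℝ →+ AddCircle (1 : ℝ) :=
  QuotientAddGroup.mk' (AddSubgroup.zmultiples (1 : ℝ))

theorem pr_apply (r : ℝ) : pr r = (r : AddCircle (1 : ℝ)) := rfl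

theorem mulStar_pr {k n : ℕ} (a : Γ → Fin k → ℝ)
    (A : Matrix (Fin n) (Fin k) (MonoidAlgebra ℤ Γ)) (i : Fin n) (s : Γ) :
    mulStar (fun j s => pr (a s j)) A i s = pr (rmulStar a A s i) := by
  unfold mulStar rmulStar
  rw [map_sum]
  refine Finset.sum_congr rfl fun j _ => ?_
  rw [map_finsuppSum]
  refine Finsupp.sum_congr fun u _ => ?_
  rw [map_zsmul]

theorem rmulStar_sub {k n : ℕ} (a b : Γ → Fin k → ℝ)
    (A : Matrix (Fin n) (Fin k) (MonoidAlgebra ℤ Γ)) (s : Γ) (i : Fin n) :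
    rmulStar (fun s j => a s j - b s j) A s i = rmulStar a A s i - rmulStar b A s i := by
  unfold rmulStar
  rw [← Finset.sum_sub_distrib]
  refine Finset.sum_congr rfl fun j _ => ?_
  rw [← Finsupp.sum_sub]
  refine Finsupp.sum_congr fun u _ => ?_
  rw [smul_sub]

theorem rmulStar_const_mul {k n : ℕ} (t : ℝ) (a : Γ → Fin k → ℝ)
    (A : Matrix (Fin n) (Fin k) (MonoidAlgebra ℤ Γ)) (s : Γ) (i : Fin n) :
    rmulStar (fun s j => t * a s j) A s i = t * rmulStar a A s i := by
  unfold rmulStar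
  simp only [Finsupp.sum, zsmul_eq_mul, Finset.mul_sum]
  refine Finset.sum_congr rfl fun j _ => Finset.sum_congr rfl fun u _ => by ring

theorem rmulStar_zero {k n : ℕ}
    (A : Matrix (Fin n) (Fin k) (MonoidAlgebra ℤ Γ)) (s : Γ) (i : Fin n) :
    rmulStar (fun _ _ => (0 : ℝ)) A s i = 0 := by
  unfold rmulStar
  simp

/-- Bound on entries of `rmulStar a A` from a uniform bound on `a`. -/
theorem rmulStar_bound {k n : ℕ} (a : Γ → Fin k → ℝ)
    (A : Matrix (Fin n) (Fin k) (MonoidAlgebra ℤ Γ)) {M : ℝ} (hM : 0 ≤ M)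
    (ha : ∀ s j, |a s j| ≤ M) (s : Γ) (i : Fin n) :
    |rmulStar a A s i| ≤ (∑ i' : Fin n, ∑ j : Fin k, (A i' j).coeff.sum fun _ c => |(c : ℝ)|) * M := by
  have hrow : (∑ j : Fin k, (A i j).coeff.sum fun _ c => |(c : ℝ)|)
      ≤ ∑ i' : Fin n, ∑ j : Fin k, (A i' j).coeff.sum fun _ c => |(c : ℝ)| := by
    refine Finset.single_le_sum (f := fun i' => ∑ j : Fin k, (A i' j).coeff.sum fun _ c => |(c : ℝ)|)
      (fun i' _ => ?_) (Finset.mem_univ i)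
    refine Finset.sum_nonneg fun j _ => Finset.sum_nonneg fun u _ => abs_nonneg _
  calc |rmulStar a A s i|
      ≤ ∑ j : Fin k, |∑ u ∈ (A i j).coeff.support, ((A i j).coeff u : ℝ) * a (s * u) j| := by
        unfold rmulStar
        simp only [Finsupp.sum, zsmul_eq_mul]
        exact Finset.abs_sum_le_sum_abs _ _
    _ ≤ ∑ j : Fin k, ∑ u ∈ (A i j).coeff.support, |((A i j).coeff u : ℝ)| * M := by
        refine Finset.sum_le_sum fun j _ => ?_
        refine le_trans (Finset.abs_sum_le_sum_abs _ _) ?_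
        refine Finset.sum_le_sum fun u _ => ?_
        rw [abs_mul]
        exact mul_le_mul_of_nonneg_left (ha _ _) (abs_nonneg _)
    _ = (∑ j : Fin k, (A i j).coeff.sum fun _ c => |(c : ℝ)|) * M := by
        simp only [Finsupp.sum, Finset.sum_mul]
    _ ≤ _ := mul_le_mul_of_nonneg_right hrow hM

end Stmt4Aux

open Stmt4 in
set_option maxHeartbeats 1000000 in
theorem stmt4 {Γ : Type*} [Group Γ] [Countable Γ] (p : ℝ≥0∞) (hp : 1 ≤ p) (k n : ℕ)
    (A : Matrix (Fin n) (Fin k) (MonoidAlgebra ℤ Γ)) :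
    -- (i): `p`-expansiveness of the shift action on `X_A`
    (∃ ε : ℝ, 0 < ε ∧ ∀ x ∈ XA A,
        pNorm p (fun s : Γ => dist (fun j => x j s) (0 : Fin k → AddCircle (1 : ℝ)))
          < ENNReal.ofReal ε → x = 0) ↔
    -- (ii): injectivity of `a ↦ aA*` on `ℓ^p(Γ, ℝ^k)`
    (∀ a b : Γ → Fin k → ℝ, pNorm p a < ⊤ → pNorm p b < ⊤ →
        rmulStar a A = rmulStar b A → a = b) := by
  haveI : Fact ((0:ℝ) < 1) := ⟨one_pos⟩
  constructor
  · -- (i) → (ii)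
    rintro ⟨ε, hε, hexp⟩ a b ha hb hab
    set c : Γ → Fin k → ℝ := fun s j => a s j - b s j with hc_def
    have hcfin : pNorm p c < ⊤ := by
      have h1 : pNorm p c = pNorm p (fun s => a s + -(b s)) := by
        refine Stmt4Aux.pNorm_congr p fun s => ?_
        have hcs : c s = a s + -(b s) := by funext j; exact sub_eq_add_neg _ _
        rw [hcs]
      have h2 : pNorm p (fun s => -(b s)) = pNorm p b :=
        Stmt4Aux.pNorm_congr p fun s => nnnorm_neg _
      rw [h1]
      calc pNorm p (fun s => a s + -(b s)) ≤ pNorm p a + pNorm p (fun s => -(b s)) :=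
            Stmt4Aux.pNorm_add_le hp a (fun s => -(b s))
        _ = pNorm p a + pNorm p b := by rw [h2]
        _ < ⊤ := ENNReal.add_lt_top.2 ⟨ha, hb⟩
    have hker : ∀ s i, rmulStar c A s i = 0 := by
      intro s i
      have h1 : rmulStar c A s i = rmulStar a A s i - rmulStar b A s i :=
        Stmt4Aux.rmulStar_sub a b A s i
      rw [h1, congrFun (congrFun hab s) i, sub_self]
    have hint : ∀ t : ℝ, 0 < t →
        (ENNReal.ofReal t) * pNorm p c < ENNReal.ofReal ε →
        ∀ s j, ∃ m : ℤ, (m : ℝ) = t * c s j := by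
      intro t ht htb s j
      set x : Fin k → Γ → AddCircle (1:ℝ) := fun j s => Stmt4Aux.pr (t * c s j) with hxdef
      have hxX : x ∈ XA A := by
        show mulStar x A = 0
        funext i s'
        show mulStar (fun j s => Stmt4Aux.pr (t * c s j)) A i s' = 0
        rw [Stmt4Aux.mulStar_pr (fun s j => t * c s j) A i s',
          Stmt4Aux.rmulStar_const_mul t c A s' i, hker s' i, mul_zero, map_zero]
      have hxsmall : pNorm p (fun s => dist (fun j => x j s)
          (0 : Fin k → AddCircle (1:ℝ))) < ENNReal.ofReal ε := by
        have hmono : pNorm p (fun s => dist (fun j => x j s)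
            (0 : Fin k → AddCircle (1:ℝ))) ≤ pNorm p (fun s => t • c s) := by
          refine Stmt4Aux.pNorm_mono p fun s => ?_
          rw [dist_zero_right, nnnorm_norm, Pi.nnnorm_def, Pi.nnnorm_def]
          refine Finset.sup_mono_fun fun j _ => ?_
          rw [← NNReal.coe_le_coe, coe_nnnorm, coe_nnnorm]
          show ‖Stmt4Aux.pr (t * c s j)‖ ≤ ‖(t • c s) j‖
          rw [Pi.smul_apply, smul_eq_mul]
          exact QuotientAddGroup.norm_mk_le_norm
        have hsc : pNorm p (fun s => t • c s) = (‖t‖₊ : ℝ≥0∞) * pNorm p c :=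
          Stmt4Aux.pNorm_smul hp t c
        refine lt_of_le_of_lt hmono ?_
        rw [hsc, ← enorm_eq_nnnorm, Real.enorm_eq_ofReal ht.le]
        exact htb
      have hx0 : x = 0 := hexp x hxX hxsmall
      have hz : (↑(t * c s j) : AddCircle (1:ℝ)) = 0 := congrFun (congrFun hx0 j) s
      rcases (AddCircle.coe_eq_zero_iff (1:ℝ)).1 hz with ⟨m, hm⟩
      exact ⟨m, by rw [← hm, zsmul_eq_mul, mul_one]⟩
    have hc0 : ∀ s j, c s j = 0 := by
      intro s j
      by_contra hv
      set v := c s j with hvdef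
      set N := (pNorm p c).toReal with hN
      have hN0 : 0 ≤ N := ENNReal.toReal_nonneg
      set δ := ε / (N + 1) with hδ
      have hδpos : 0 < δ := div_pos hε (by linarith)
      have key : ∀ t : ℝ, 0 < t → t < δ → ∃ m : ℤ, (m:ℝ) = t * v := by
        intro t ht htδ
        refine hint t ht ?_ s j
        have hpc : pNorm p c = ENNReal.ofReal N := (ENNReal.ofReal_toReal hcfin.ne).symm
        rw [hpc, ← ENNReal.ofReal_mul ht.le]
        refine ENNReal.ofReal_lt_ofReal_iff hε |>.2 ?_
        calc t * N ≤ t * (N + 1) := by nlinarith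
          _ < δ * (N + 1) := by nlinarith
          _ = ε := by rw [hδ, div_mul_cancel₀ _ (by linarith : N + 1 ≠ 0)]
      have hvpos : 0 < |v| := abs_pos.2 hv
      set d := min (δ/4) (1/(2*|v|)) with hd
      have hdpos : 0 < d := lt_min (by linarith) (by positivity)
      have hdle : d ≤ δ/4 := min_le_left _ _
      obtain ⟨m₁, hm₁⟩ := key (δ/2) (by linarith) (by linarith)
      obtain ⟨m₂, hm₂⟩ := key (δ/2 + d) (by linarith) (by linarith)
      have hdv : (↑(m₂ - m₁) : ℝ) = d * v := by
        push_cast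
        rw [hm₁, hm₂]
        ring
      have habs : |(↑(m₂ - m₁) : ℝ)| < 1 := by
        rw [hdv, abs_mul, abs_of_pos hdpos]
        have hdle2 : d ≤ 1/(2*|v|) := min_le_right _ _
        calc d * |v| ≤ (1/(2*|v|)) * |v| :=
              mul_le_mul_of_nonneg_right hdle2 (abs_nonneg v)
          _ = 1/2 := by field_simp
          _ < 1 := by norm_num
      have hm0 : m₂ - m₁ = 0 := by
        have h5 : |m₂ - m₁| < 1 := by exact_mod_cast habs
        rw [abs_lt] at h5
        omega
      rw [hm0] at hdv
      simp only [Int.cast_zero] at hdv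
      rcases mul_eq_zero.1 hdv.symm with h | h
      · exact hdpos.ne' h
      · exact hv h
    funext s j
    have := hc0 s j
    simp only [hc_def] at this
    linarith
  · -- (ii) → (i)
    intro hinj
    set C : ℝ := ∑ i : Fin n, ∑ j : Fin k, (A i j).coeff.sum fun _ c => |(c:ℝ)| with hC
    have hC0 : 0 ≤ C := by
      refine Finset.sum_nonneg fun i _ => Finset.sum_nonneg fun j _ => ?_
      rw [Finsupp.sum]
      exact Finset.sum_nonneg fun u _ => abs_nonneg _
    refine ⟨1/(C+1), by positivity, ?_⟩
    intro x hxX hxsmall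
    set a : Γ → Fin k → ℝ :=
      fun s j => ((AddCircle.equivIco 1 (-(1/2)) (x j s) : Set.Ico _ _) : ℝ) with hadef
    have key1 : ∀ s j, ((a s j : ℝ) : AddCircle (1:ℝ)) = x j s := by
      intro s j
      exact (AddCircle.equivIco 1 (-(1/2))).symm_apply_apply (x j s)
    have hmem : ∀ s j, a s j ∈ Set.Ico (-(1/2) : ℝ) (-(1/2) + 1) := fun s j =>
      (AddCircle.equivIco 1 (-(1/2)) (x j s)).2
    have key2 : ∀ s j, |a s j| = ‖x j s‖ := by
      intro s j
      rw [← key1 s j, AddCircle.norm_eq]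
      have hm := hmem s j
      have h1 : round ((1:ℝ)⁻¹ * a s j) = 0 := by
        rw [inv_one, one_mul, round_eq, Int.floor_eq_zero_iff]
        constructor
        · have := hm.1; linarith
        · have := hm.2; simp only [Set.mem_Ico] at *; linarith
      rw [h1]
      simp
    have keyE : ∀ s, ‖dist (fun j => x j s) (0 : Fin k → AddCircle (1:ℝ))‖₊ = ‖a s‖₊ := by
      intro s
      rw [dist_zero_right, nnnorm_norm, Pi.nnnorm_def, Pi.nnnorm_def]
      congr 1
      funext j
      refine NNReal.coe_injective ?_
      rw [coe_nnnorm, coe_nnnorm, Real.norm_eq_abs, key2 s j]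
    have hpa : pNorm p (fun s => dist (fun j => x j s)
        (0 : Fin k → AddCircle (1:ℝ))) = pNorm p a := Stmt4Aux.pNorm_congr p keyE
    have hafin : pNorm p a < ⊤ := by
      rw [← hpa]
      exact hxsmall.trans ENNReal.ofReal_lt_top
    have hsmall : ∀ s j, |a s j| ≤ 1/(C+1) := by
      intro s j
      have h1 : (‖a s‖₊ : ℝ≥0∞) < ENNReal.ofReal (1/(C+1)) := by
        rw [← keyE s]
        exact lt_of_le_of_lt (Stmt4Aux.le_pNorm hp _ s) hxsmall
      have h2 : ENNReal.ofReal ‖a s‖ < ENNReal.ofReal (1/(C+1)) := by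
        rwa [← Real.enorm_eq_ofReal (norm_nonneg _), enorm_eq_nnnorm, nnnorm_norm]
      have h3 : ‖a s‖ < 1/(C+1) :=
        (ENNReal.ofReal_lt_ofReal_iff_of_nonneg (norm_nonneg _)).1 h2
      calc |a s j| = ‖a s j‖ := (Real.norm_eq_abs _).symm
        _ ≤ ‖a s‖ := norm_le_pi_norm (a s) j
        _ ≤ 1/(C+1) := h3.le
    have hmul0 : ∀ s i, ((rmulStar a A s i : ℝ) : AddCircle (1:ℝ)) = 0 := by
      intro s i
      rw [← Stmt4Aux.pr_apply, ← Stmt4Aux.mulStar_pr a A i s]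
      have hxx : (fun j s => Stmt4Aux.pr (a s j)) = x := by
        funext j s'
        exact key1 s' j
      rw [hxx]
      have hx0 : mulStar x A = 0 := hxX
      rw [hx0]
      rfl
    have hker : rmulStar a A = 0 := by
      funext s i
      rcases (AddCircle.coe_eq_zero_iff (1:ℝ)).1 (hmul0 s i) with ⟨m, hm⟩
      have hb := Stmt4Aux.rmulStar_bound a A (M := 1/(C+1)) (by positivity) hsmall s i
      have hlt : |rmulStar a A s i| < 1 := by
        refine lt_of_le_of_lt hb ?_
        rw [mul_one_div, div_lt_one (by linarith)]
        linarith
      rw [← hm, zsmul_eq_mul, mul_one] at hlt ⊢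
      have h5 : |m| < 1 := by exact_mod_cast hlt
      rw [abs_lt] at h5
      have hm0 : m = 0 := by omega
      rw [hm0]
      simp
    have ha0 : a = 0 := by
      refine hinj a 0 hafin ?_ ?_
      · have h0 : pNorm p (0 : Γ → Fin k → ℝ) = 0 := Stmt4Aux.pNorm_zero hp
        rw [h0]
        exact ENNReal.zero_lt_top
      · funext s i
        rw [congrFun (congrFun hker s) i]
        rw [show rmulStar (0 : Γ → Fin k → ℝ) A s i = rmulStar (fun _ _ => (0:ℝ)) A s i from rfl,
          Stmt4Aux.rmulStar_zero A s i]
        rfl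
    funext j s
    rw [← key1 s j, congrFun (congrFun ha0 s) j]
    simp
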